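/- Let D ⊂ ℂ be a bounded regular domain and p₀ ∈ ∂D. Then the Robin function satisfies Λ_D(p) → -∞ as p → p₀ within D. Equivalently, the capacity density c_D(p) = e^{-Λ_D(p)} tends to +∞ at the boundary. -/

import Mathlib

open Complex Metric Filter

noncomputable section

/-- A twice continuously differentiable function is harmonic on a set if its Laplacian
vanishes there. -/
def IsHarmonicOn (f : ℂ → ℝ) (s : Set ℂ) : Prop :=
  ContDiffOn ℝ 2 f s ∧
    ∀ z ∈ s, iteratedFDeriv ℝ 2 f z ![1, 1] + iteratedFDeriv ℝ 2 f z ![Complex.I, Complex.I] = 0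

set_option maxHeartbeats 1000000



lemma log_le_div {m : ℝ} (hm : 0 < m) : Real.log ((m+1)/m) ≤ 1/m := by
  have h := Real.log_le_sub_one_of_pos (x := (m+1)/m) (by positivity)
  have : (m+1)/m - 1 = 1/m := by field_simp; ring
  linarith [h, this.le]

lemma log_factorial_ge (m : ℕ) : (m:ℝ) * Real.log m - m ≤ Real.log (Nat.factorial m) := by
  induction m with
  | zero => simp
  | succ m ih =>
    have hfact : Real.log (Nat.factorial (m+1)) = Real.log (m+1) + Real.log (Nat.factorial m) := by
      rw [Nat.factorial_succ]
      push_cast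
      rw [Real.log_mul (by positivity) (show ((Nat.factorial m : ℝ)) ≠ 0 by exact_mod_cast (Nat.factorial_pos m).ne')]
    rw [hfact]
    have key : (m:ℝ) * Real.log (m+1) ≤ (m:ℝ) * Real.log m + 1 := by
      rcases Nat.eq_zero_or_pos m with h0 | hpos
      · subst h0; simp
      · have hm : (0:ℝ) < m := by exact_mod_cast hpos
        have h1 : Real.log ((m:ℝ)+1) - Real.log m = Real.log (((m:ℝ)+1)/m) := by
          rw [Real.log_div (by positivity) hm.ne']
        have h2 := log_le_div hm
        have h3 : (m:ℝ) * (Real.log ((m:ℝ)+1) - Real.log m) ≤ (m:ℝ) * (1/m) :=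
          mul_le_mul_of_nonneg_left (by rw [h1]; exact h2) hm.le
        rw [mul_one_div, div_self hm.ne'] at h3
        nlinarith
    push_cast
    nlinarith

lemma xlogx_conv {x y : ℝ} (hx : 0 ≤ x) (hy : 0 ≤ y) :
    (x+y) * Real.log ((x+y)/2) ≤ x * Real.log x + y * Real.log y := by
  rcases hx.eq_or_lt with h0 | hx'
  · subst h0
    simp only [zero_add, zero_mul]
    rcases hy.eq_or_lt with h0' | hy'
    · subst h0'; simp
    · have : Real.log (y/2) ≤ Real.log y := Real.log_le_log (by positivity) (by linarith)
      nlinarith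
  rcases hy.eq_or_lt with h0' | hy'
  · subst h0'
    simp only [add_zero, zero_mul]
    have : Real.log (x/2) ≤ Real.log x := Real.log_le_log (by positivity) (by linarith)
    nlinarith
  · -- both positive
    set s := x + y with hs
    have hspos : 0 < s := by positivity
    have key : ∀ u : ℝ, 0 < u → u * Real.log u - u * Real.log (s/2) ≥ u - s/2 := by
      intro u hu
      have h1 : Real.log u - Real.log (s/2) = Real.log (u / (s/2)) := by
        rw [Real.log_div hu.ne' (by positivity)]
      have h2 : Real.log ((s/2) / u) ≤ (s/2)/u - 1 := Real.log_le_sub_one_of_pos (by positivity)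
      have h3 : Real.log (u / (s/2)) = - Real.log ((s/2)/u) := by
        rw [← Real.log_inv]
        congr 1
        field_simp
      have h4 : Real.log (u/(s/2)) ≥ 1 - (s/2)/u := by rw [h3]; linarith
      have h5 : u * Real.log (u/(s/2)) ≥ u * (1 - (s/2)/u) :=
        mul_le_mul_of_nonneg_left h4 hu.le
      have h6 : u * (1 - (s/2)/u) = u - s/2 := by field_simp
      rw [h6] at h5
      nlinarith [h1, h5]
    have k1 := key x hx'
    have k2 := key y hy'
    have : x * Real.log x + y * Real.log y - s * Real.log (s/2) ≥ (x - s/2) + (y - s/2) := by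
      have : s * Real.log (s/2) = x * Real.log (s/2) + y * Real.log (s/2) := by rw [hs]; ring
      linarith
    have : (x - s/2) + (y - s/2) = 0 := by rw [hs]; ring
    linarith

lemma two_log_factorial (a b n : ℕ) (h : a + b = n) :
    (n:ℝ) * Real.log ((n:ℝ)/2) - n ≤ Real.log (Nat.factorial a) + Real.log (Nat.factorial b) := by
  have h1 := log_factorial_ge a
  have h2 := log_factorial_ge b
  have h3 := xlogx_conv (Nat.cast_nonneg a) (Nat.cast_nonneg b : (0:ℝ) ≤ b)
  have hn : ((a:ℝ) + b) = n := by exact_mod_cast congrArg (Nat.cast : ℕ → ℝ) h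
  rw [hn] at h3
  push_cast
  push_cast at h1 h2 h3
  nlinarith [h3]

lemma log_factorial_sum (m : ℕ) :
    Real.log (Nat.factorial m) = ∑ j ∈ Finset.range m, Real.log ((j:ℝ)+1) := by
  induction m with
  | zero => simp
  | succ m ih =>
    rw [Finset.sum_range_succ, ← ih, Nat.factorial_succ]
    push_cast
    rw [Real.log_mul (by positivity) (show ((Nat.factorial m : ℝ)) ≠ 0 by exact_mod_cast (Nat.factorial_pos m).ne')]
    ring



lemma sum_log_dist_ge (n k₀ : ℕ) (hk₀ : k₀ < n) :
    Real.log (Nat.factorial k₀) + Real.log (Nat.factorial (n - 1 - k₀))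
      = ∑ k ∈ Finset.range n, Real.log |(k:ℝ) - (k₀:ℝ)| := by
  have hsplit : ∑ k ∈ Finset.range n, Real.log |(k:ℝ) - (k₀:ℝ)|
      = (∑ k ∈ Finset.range k₀, Real.log |(k:ℝ) - (k₀:ℝ)|)
        + ∑ k ∈ Finset.Ico k₀ n, Real.log |(k:ℝ) - (k₀:ℝ)| := by
    rw [Finset.range_eq_Ico, ← Finset.sum_Ico_consecutive _ (Nat.zero_le k₀) (le_of_lt hk₀)]
    rw [Finset.range_eq_Ico]
  rw [hsplit]
  have h1 : ∑ k ∈ Finset.range k₀, Real.log |(k:ℝ) - (k₀:ℝ)|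
      = Real.log (Nat.factorial k₀) := by
    rw [log_factorial_sum k₀]
    rw [← Finset.sum_range_reflect]
    apply Finset.sum_congr rfl
    intro j hj
    simp only [Finset.mem_range] at hj
    have hj1 : (1:ℕ) ≤ k₀ := by omega
    have : ((k₀ - 1 - j : ℕ) : ℝ) = (k₀:ℝ) - 1 - j := by
      have : k₀ - 1 - j + j + 1 = k₀ := by omega
      push_cast [Nat.cast_sub (by omega : j ≤ k₀ - 1), Nat.cast_sub hj1]
      ring
    rw [this]
    rw [_root_.abs_of_nonpos (by linarith [show (0:ℝ) ≤ (j:ℝ) from Nat.cast_nonneg j])]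
    congr 1
    push_cast
    ring
  have h2 : ∑ k ∈ Finset.Ico k₀ n, Real.log |(k:ℝ) - (k₀:ℝ)|
      = Real.log (Nat.factorial (n - 1 - k₀)) := by
    rw [Finset.sum_Ico_eq_sum_range]
    have hn : n - k₀ = (n - 1 - k₀) + 1 := by omega
    rw [hn, Finset.sum_range_succ']
    simp only [Nat.cast_add, Nat.cast_zero]
    rw [log_factorial_sum (n - 1 - k₀)]
    have : ∀ j ∈ Finset.range (n - 1 - k₀),
        Real.log |((k₀:ℝ) + (j+1)) - (k₀:ℝ)| = Real.log ((j:ℝ)+1) := by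
      intro j hj
      congr 1
      rw [_root_.abs_of_nonneg (by push_cast; linarith)]
      push_cast; ring
    rw [Finset.sum_congr rfl (by intro j hj; push_cast; exact this j hj)]
    simp
  rw [h1, h2]

lemma grid_bound {n : ℕ} (hn : 2 ≤ n) {g d' : ℝ} (x : ℝ) (hg : 0 < g) (hd' : 0 < d')
    {t : ℕ → ℝ} (hsep : ∀ j k : ℕ, j < n → k < n → |(j:ℝ) - (k:ℝ)| * g ≤ |t j - t k|) :
    Real.log d' + ((n:ℝ)-1) * (Real.log (((n:ℝ)-1) * g / 4) - 1)
      ≤ ∑ k ∈ Finset.range n, Real.log (max d' |x - t k|) := by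
  obtain ⟨k₀, hk₀mem, hk₀min⟩ := Finset.exists_min_image (Finset.range n)
    (fun k => |x - t k|) ⟨0, Finset.mem_range.mpr (by omega)⟩
  have hk₀n : k₀ < n := Finset.mem_range.mp hk₀mem
  -- separation from the minimizer
  have hdist : ∀ k, k < n → k ≠ k₀ → |(k:ℝ) - (k₀:ℝ)| * g / 2 ≤ |x - t k| := by
    intro k hk hne
    have h1 : |t k - t k₀| ≤ |x - t k| + |x - t k₀| := by
      have := abs_sub_abs_le_abs_sub (x - t k₀) (x - t k)
      have h2 := abs_sub (x - t k₀) (x - t k)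
      calc |t k - t k₀| = |(x - t k₀) - (x - t k)| := by ring_nf
      _ ≤ |x - t k₀| + |x - t k| := abs_sub _ _
      _ = |x - t k| + |x - t k₀| := by ring
    have h2 : |x - t k₀| ≤ |x - t k| := hk₀min k (Finset.mem_range.mpr hk)
    have h3 := hsep k k₀ hk hk₀n
    linarith
  -- split the sum
  rw [← Finset.sum_erase_add _ _ hk₀mem]
  have hterm0 : Real.log d' ≤ Real.log (max d' |x - t k₀|) :=
    Real.log_le_log hd' (le_max_left _ _)
  have hterms : ∀ k ∈ (Finset.range n).erase k₀,
      Real.log (|(k:ℝ) - (k₀:ℝ)| * g / 2) ≤ Real.log (max d' |x - t k|) := by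
    intro k hk
    obtain ⟨hne, hkr⟩ := Finset.mem_erase.mp hk
    have hkn := Finset.mem_range.mp hkr
    have hpos : 0 < |(k:ℝ) - (k₀:ℝ)| * g / 2 := by
      have : (1:ℝ) ≤ |(k:ℝ) - (k₀:ℝ)| := by
        have : (k:ℝ) - (k₀:ℝ) ≠ 0 := by
          intro hc
          apply hne
          have : (k:ℝ) = (k₀:ℝ) := by linarith
          exact_mod_cast this
        rcases lt_or_gt_of_ne this with h | h
        · rw [_root_.abs_of_neg h]
          have : (k₀:ℝ) - k ≥ 1 := by
            have : k < k₀ := by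
              by_contra hc
              push_neg at hc
              have : (k₀:ℝ) ≤ (k:ℝ) := Nat.cast_le.mpr hc
              linarith
            have h9 : k + 1 ≤ k₀ := this
            have h10 : ((k:ℝ) + 1) ≤ (k₀:ℝ) := by exact_mod_cast h9
            linarith
          linarith
        · rw [_root_.abs_of_pos h]
          have : k₀ < k := by
            by_contra hc
            push_neg at hc
            have : (k:ℝ) ≤ (k₀:ℝ) := Nat.cast_le.mpr hc
            linarith
          have h9 : k₀ + 1 ≤ k := this
          have h10 : ((k₀:ℝ) + 1) ≤ (k:ℝ) := by exact_mod_cast h9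
          linarith
      positivity
    apply Real.log_le_log hpos
    exact le_trans (hdist k hkn hne) (le_max_right _ _)
  have hsum1 : ∑ k ∈ (Finset.range n).erase k₀, Real.log (|(k:ℝ) - (k₀:ℝ)| * g / 2)
      ≤ ∑ k ∈ (Finset.range n).erase k₀, Real.log (max d' |x - t k|) :=
    Finset.sum_le_sum hterms
  -- compute the lower sum
  have hcompute : ∑ k ∈ (Finset.range n).erase k₀, Real.log (|(k:ℝ) - (k₀:ℝ)| * g / 2)
      = (∑ k ∈ (Finset.range n).erase k₀, Real.log |(k:ℝ) - (k₀:ℝ)|)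
        + ((n:ℝ) - 1) * Real.log (g/2) := by
    have hcard : ((Finset.range n).erase k₀).card = n - 1 := by
      rw [Finset.card_erase_of_mem hk₀mem, Finset.card_range]
    have : ∀ k ∈ (Finset.range n).erase k₀,
        Real.log (|(k:ℝ) - (k₀:ℝ)| * g / 2)
          = Real.log |(k:ℝ) - (k₀:ℝ)| + Real.log (g/2) := by
      intro k hk
      obtain ⟨hne, hkr⟩ := Finset.mem_erase.mp hk
      have habs : |(k:ℝ) - (k₀:ℝ)| ≠ 0 := by
        simp only [ne_eq, abs_eq_zero, sub_eq_zero]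
        intro hc
        exact hne (by exact_mod_cast hc)
      rw [mul_div_assoc, Real.log_mul habs (by positivity)]
    rw [Finset.sum_congr rfl this, Finset.sum_add_distrib, Finset.sum_const, hcard]
    have : ((n - 1 : ℕ) : ℝ) = (n:ℝ) - 1 := by
      push_cast [Nat.cast_sub (by omega : 1 ≤ n)]
      ring
    rw [nsmul_eq_mul, this]
  -- erase sum of log |k - k₀| equals full sum (the k₀ term is log 0 = 0)
  have herase : ∑ k ∈ (Finset.range n).erase k₀, Real.log |(k:ℝ) - (k₀:ℝ)|
      = ∑ k ∈ Finset.range n, Real.log |(k:ℝ) - (k₀:ℝ)| := by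
    rw [← Finset.sum_erase_add _ _ hk₀mem]
    simp
  have hfact := sum_log_dist_ge n k₀ hk₀n
  have htwo := two_log_factorial k₀ (n - 1 - k₀) (n-1) (by omega)
  have hcast : ((n - 1 : ℕ) : ℝ) = (n:ℝ) - 1 := by
    push_cast [Nat.cast_sub (by omega : 1 ≤ n)]
    ring
  rw [hcast] at htwo
  -- combine logarithms
  have hlogmul : Real.log (g/2) + Real.log (((n:ℝ)-1)/2) = Real.log (((n:ℝ)-1) * g / 4) := by
    rw [← Real.log_mul (by positivity) (by
      have : (1:ℝ) ≤ (n:ℝ) - 1 := by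
        have : (2:ℝ) ≤ (n:ℝ) := by exact_mod_cast hn
        linarith
      positivity)]
    congr 1
    ring
  have hn1 : (1:ℝ) ≤ (n:ℝ) - 1 := by
    have : (2:ℝ) ≤ (n:ℝ) := by exact_mod_cast hn
    linarith
  calc Real.log d' + ((n:ℝ)-1) * (Real.log (((n:ℝ)-1) * g / 4) - 1)
      = Real.log d' + (((n:ℝ)-1) * Real.log (g/2)
        + (((n:ℝ)-1) * Real.log (((n:ℝ)-1)/2) - ((n:ℝ)-1))) := by
        rw [← hlogmul]; ring
  _ ≤ Real.log d' + (((n:ℝ)-1) * Real.log (g/2)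
        + (Real.log (Nat.factorial k₀) + Real.log (Nat.factorial (n-1-k₀)))) := by
        have := htwo
        linarith
  _ = Real.log d' + ((∑ k ∈ (Finset.range n).erase k₀, Real.log |(k:ℝ) - (k₀:ℝ)|)
        + ((n:ℝ) - 1) * Real.log (g/2)) := by
        rw [herase, ← hfact]; ring
  _ = Real.log d' + ∑ k ∈ (Finset.range n).erase k₀, Real.log (|(k:ℝ) - (k₀:ℝ)| * g / 2) := by
        rw [hcompute]
  _ ≤ ∑ k ∈ (Finset.range n).erase k₀, Real.log (max d' |x - t k|)
        + Real.log (max d' |x - t k₀|) := by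
        linarith


/-- Second directional derivative test at an interior local max. -/
lemma second_deriv_test {φ : ℂ → ℝ} {U : Set ℂ} (hU : IsOpen U)
    (hφ : ContDiffOn ℝ 2 φ U) {z₀ : ℂ} (hz : z₀ ∈ U) (hmax : IsLocalMax φ z₀) (v : ℂ) :
    fderiv ℝ (fderiv ℝ φ) z₀ v v ≤ 0 := by
  by_contra hpos
  push_neg at hpos
  set c := fderiv ℝ (fderiv ℝ φ) z₀ v v with hc
  set F : ℝ → ℂ := fun s => z₀ + s • v with hF
  have hF0 : F 0 = z₀ := by simp [hF]
  have hFc : Continuous F := by continuity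
  have hFd : ∀ s : ℝ, HasDerivAt F v s := by
    intro s
    simpa [hF] using ((hasDerivAt_id s).smul_const v).const_add z₀
  set J : Set ℝ := F ⁻¹' U with hJ
  have hJo : IsOpen J := hU.preimage hFc
  have hJ0 : (0:ℝ) ∈ J := by simp [hJ, hF0, hz]
  set ψ : ℝ → ℝ := fun s => φ (F s) with hψ
  set g : ℝ → ℝ := fun s => fderiv ℝ φ (F s) v with hg
  have hψd : ∀ s ∈ J, HasDerivAt ψ (g s) s := by
    intro s hs
    have hφd : DifferentiableAt ℝ φ (F s) :=
      (hφ.contDiffAt (hU.mem_nhds hs)).differentiableAt (by norm_num)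
    exact (hφd.hasFDerivAt.comp_hasDerivAt s (hFd s))
  have hg0 : HasDerivAt g c 0 := by
    have h2 : ContDiffAt ℝ 1 (fderiv ℝ φ) z₀ :=
      (hφ.contDiffAt (hU.mem_nhds hz)).fderiv_right (by norm_num)
    have hdd : DifferentiableAt ℝ (fderiv ℝ φ) z₀ := h2.differentiableAt (by norm_num)
    have h3 : HasDerivAt (fun s => fderiv ℝ φ (F s)) (fderiv ℝ (fderiv ℝ φ) z₀ v) 0 := by
      have hdd' : HasFDerivAt (fderiv ℝ φ) (fderiv ℝ (fderiv ℝ φ) z₀) (F 0) := by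
        rw [hF0]; exact hdd.hasFDerivAt
      exact hdd'.comp_hasDerivAt 0 (hFd 0)
    simpa [hc] using h3.clm_apply (hasDerivAt_const 0 v)
  have hψmax : IsLocalMax ψ 0 := by
    have hT : Filter.Tendsto F (nhds 0) (nhds z₀) := by
      have := hFc.continuousAt (x := (0:ℝ))
      rw [ContinuousAt, hF0] at this
      exact this
    have := hT.eventually hmax
    simpa [IsLocalMax, IsMaxFilter, hψ, hF0] using this
  have hg0z : g 0 = 0 := by
    have hd0 : HasDerivAt ψ (g 0) 0 := hψd 0 hJ0
    have := hψmax.deriv_eq_zero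
    rwa [hd0.deriv] at this
  -- g positive on right neighborhood
  have hslope : ∀ᶠ s in nhdsWithin (0:ℝ) (Set.Ioi 0), 0 < g s := by
    have h1 : Filter.Tendsto (slope g 0) (nhdsWithin 0 {(0:ℝ)}ᶜ) (nhds c) :=
      hasDerivAt_iff_tendsto_slope.mp hg0
    have h2 : ∀ᶠ s in nhdsWithin (0:ℝ) {(0:ℝ)}ᶜ, 0 < slope g 0 s :=
      h1.eventually (eventually_gt_nhds hpos)
    have h3 : nhdsWithin (0:ℝ) (Set.Ioi 0) ≤ nhdsWithin (0:ℝ) {(0:ℝ)}ᶜ :=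
      nhdsWithin_mono 0 (by intro x hx; exact ne_of_gt hx)
    filter_upwards [h3 h2, self_mem_nhdsWithin] with s hs hs'
    have hspos : (0:ℝ) < s := hs'
    have hsl : slope g 0 s = (g s - g 0) / (s - 0) := slope_def_field g 0 s
    rw [hsl] at hs
    have : 0 < g s - g 0 := by
      by_contra hle
      push_neg at hle
      have : (g s - g 0) / (s - 0) ≤ 0 :=
        div_nonpos_of_nonpos_of_nonneg (by linarith) (by linarith)
      linarith
    rw [hg0z] at this; linarith
  -- find interval where ψ increasing, contradict local max
  obtain ⟨ε₁, hε₁, hball⟩ := Metric.mem_nhds_iff.mp (hJo.mem_nhds hJ0)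
  obtain ⟨ε₂, hε₂, hmaxball⟩ := Metric.mem_nhds_iff.mp hψmax
  obtain ⟨ε₃, hε₃, hgpos⟩ := mem_nhdsGT_iff_exists_Ioo_subset.mp hslope
  set ε := min ε₁ (min ε₂ ε₃) with hε
  have hεpos : 0 < ε := lt_min hε₁ (lt_min hε₂ hε₃)
  have hIccJ : Set.Icc (0:ℝ) (ε/2) ⊆ J := by
    intro x hx
    apply hball
    simp only [Metric.mem_ball, Real.dist_eq, sub_zero]
    rw [_root_.abs_of_nonneg hx.1]
    calc x ≤ ε/2 := hx.2
    _ < ε := by linarith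
    _ ≤ ε₁ := min_le_left _ _
  have hmono : StrictMonoOn ψ (Set.Icc (0:ℝ) (ε/2)) := by
    apply strictMonoOn_of_deriv_pos (convex_Icc _ _)
    · exact ContinuousOn.mono (fun x hx => (hψd x hx).differentiableAt.continuousAt.continuousWithinAt) hIccJ
    · intro x hx
      rw [interior_Icc] at hx
      rw [(hψd x (hIccJ ⟨le_of_lt hx.1, le_of_lt hx.2⟩)).deriv]
      apply hgpos
      constructor
      · exact hx.1
      · calc x < ε/2 := hx.2
        _ < ε := by linarith
        _ ≤ ε₃ := le_trans (min_le_right _ _) (min_le_right _ _)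
  have h1 : ψ 0 < ψ (ε/2) := hmono (by constructor <;> linarith) (by constructor <;> linarith) (by linarith)
  have h2 : ψ (ε/2) ≤ ψ 0 := by
    apply hmaxball
    simp only [Metric.mem_ball, Real.dist_eq, sub_zero]
    rw [_root_.abs_of_nonneg (by linarith : (0:ℝ) ≤ ε/2)]
    calc ε/2 < ε := by linarith
    _ ≤ ε₂ := le_trans (min_le_right _ _) (min_le_left _ _)
  linarith


def qA : ℂ →L[ℝ] (ℂ →L[ℝ] ℝ) := ((2:ℝ) • Complex.reCLM).smulRight Complex.reCLM

lemma qA_apply (v w : ℂ) : qA v w = 2 * v.re * w.re := by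
  simp [qA, ContinuousLinearMap.smulRight_apply]

lemma hasFDerivAt_resq (z : ℂ) : HasFDerivAt (fun z : ℂ => z.re * z.re) (qA z) z := by
  have h := (Complex.reCLM.hasFDerivAt (x := z)).mul (Complex.reCLM.hasFDerivAt (x := z))
  refine h.congr_fderiv ?_
  ext w
  simp [qA, ContinuousLinearMap.smulRight_apply]
  ring

lemma contDiff_resq : ContDiff ℝ 2 (fun z : ℂ => z.re * z.re) :=
  (Complex.reCLM.contDiff.mul Complex.reCLM.contDiff).of_le le_top

lemma fderiv_fderiv_resq (z v w : ℂ) :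
    fderiv ℝ (fderiv ℝ (fun z : ℂ => z.re * z.re)) z v w = 2 * v.re * w.re := by
  have h1 : fderiv ℝ (fun z : ℂ => z.re * z.re) = fun z => qA z := by
    funext z; exact (hasFDerivAt_resq z).fderiv
  rw [h1]
  have h2 : fderiv ℝ (fun z => qA z) z = qA := qA.fderiv
  rw [h2, qA_apply]


/-- Weak maximum principle for C² functions with vanishing Laplacian. -/
lemma max_principle {D : Set ℂ} (hD : IsOpen D) (hb : Bornology.IsBounded D)
    {w : ℂ → ℝ} (hw2 : ContDiffOn ℝ 2 w D)
    (hlap : ∀ z ∈ D, fderiv ℝ (fderiv ℝ w) z 1 1 + fderiv ℝ (fderiv ℝ w) z Complex.I Complex.I = 0)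
    (hc : ContinuousOn w (closure D))
    (hfr : ∀ ζ ∈ frontier D, w ζ ≤ 0) :
    ∀ z ∈ D, w z ≤ 0 := by
  intro z₁ hz₁
  by_contra hpos
  push_neg at hpos
  have hK : IsCompact (closure D) := hb.isCompact_closure
  obtain ⟨R, hR⟩ := (hb.closure).subset_closedBall 0
  have hR0 : (0:ℝ) ≤ R := by
    have := hR (subset_closure hz₁)
    simp only [Metric.mem_closedBall, dist_zero_right] at this
    exact le_trans (norm_nonneg _) this
  have hqbd : ∀ z ∈ closure D, z.re * z.re ≤ R * R := by
    intro z hz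
    have h1 : ‖z‖ ≤ R := by
      have := hR hz; simpa using this
    have h2 : |z.re| ≤ R := le_trans (Complex.abs_re_le_norm z) h1
    calc z.re * z.re = |z.re| * |z.re| := (abs_mul_abs_self z.re).symm
    _ ≤ R * R := mul_le_mul h2 h2 (abs_nonneg _) hR0
  set B : ℝ := R * R + 1 with hB
  have hBpos : 0 < B := by nlinarith
  set ε : ℝ := w z₁ / B with hε
  have hεpos : 0 < ε := div_pos hpos hBpos
  set φ : ℂ → ℝ := fun z => w z + ε * (z.re * z.re) with hφ
  have hφc : ContinuousOn φ (closure D) :=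
    hc.add ((continuous_const.mul (Complex.continuous_re.mul Complex.continuous_re)).continuousOn)
  obtain ⟨z₀, hz₀K, hmax0⟩ := hK.exists_isMaxOn ⟨z₁, subset_closure hz₁⟩ hφc
  have hfrb : ∀ ζ ∈ frontier D, φ ζ < φ z₁ := by
    intro ζ hζ
    have h1 : φ ζ ≤ 0 + ε * (R * R) := by
      apply add_le_add (hfr ζ hζ)
      have : ζ ∈ closure D := frontier_subset_closure hζ
      exact mul_le_mul_of_nonneg_left (hqbd ζ this) (le_of_lt hεpos)
    have h2 : ε * (R * R) < w z₁ := by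
      rw [hε]; rw [div_mul_eq_mul_div, div_lt_iff₀ hBpos]
      nlinarith
    have h3 : w z₁ ≤ φ z₁ := by
      simp only [hφ]
      nlinarith [mul_self_nonneg z₁.re]
    linarith
  have hz₀D : z₀ ∈ D := by
    have := (closure_eq_self_union_frontier D) ▸ hz₀K
    rcases this with h | h
    · exact h
    · exfalso
      have := hfrb z₀ h
      have h2 : φ z₁ ≤ φ z₀ := hmax0 (subset_closure hz₁)
      linarith
  have hlocmax : IsLocalMax φ z₀ := by
    filter_upwards [hD.mem_nhds hz₀D] with z hz
    exact hmax0 (subset_closure hz)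
  have hφ2 : ContDiffOn ℝ 2 φ D := hw2.add ((contDiff_resq.const_smul ε).contDiffOn.congr (by
    intro z hz; simp [smul_eq_mul]))
  -- second derivative identity
  have hkey : ∀ v : ℂ, fderiv ℝ (fderiv ℝ φ) z₀ v v
      = fderiv ℝ (fderiv ℝ w) z₀ v v + ε * (2 * v.re * v.re) := by
    intro v
    have hev : (fun z => fderiv ℝ φ z) =ᶠ[nhds z₀] (fun z => fderiv ℝ w z + ε • qA z) := by
      filter_upwards [hD.mem_nhds hz₀D] with z hz
      have hwd : DifferentiableAt ℝ w z :=
        (hw2.contDiffAt (hD.mem_nhds hz)).differentiableAt (by norm_num)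
      have hqd : HasFDerivAt (fun z : ℂ => ε * (z.re * z.re)) (ε • qA z) z :=
        (hasFDerivAt_resq z).const_mul ε
      calc fderiv ℝ φ z = fderiv ℝ w z + fderiv ℝ (fun z : ℂ => ε * (z.re * z.re)) z := by
            rw [hφ]
            exact fderiv_add hwd hqd.differentiableAt
      _ = fderiv ℝ w z + ε • qA z := by rw [hqd.fderiv]
    have h1 : fderiv ℝ (fderiv ℝ φ) z₀ = fderiv ℝ (fun z => fderiv ℝ w z + ε • qA z) z₀ :=
      hev.fderiv_eq
    have hcd1 : ContDiffAt ℝ 1 (fderiv ℝ w) z₀ :=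
      (hw2.contDiffAt (hD.mem_nhds hz₀D)).fderiv_right (by norm_num)
    have hwdd : DifferentiableAt ℝ (fderiv ℝ w) z₀ := hcd1.differentiableAt (by norm_num)
    have hAdd : DifferentiableAt ℝ (fun z : ℂ => ε • qA z) z₀ := by
      have : (fun z : ℂ => ε • qA z) = fun z => (ε • qA) z := by
        funext z; simp
      rw [this]
      exact (ε • qA).differentiableAt
    have h2 : fderiv ℝ (fun z => fderiv ℝ w z + ε • qA z) z₀
        = fderiv ℝ (fderiv ℝ w) z₀ + fderiv ℝ (fun z : ℂ => ε • qA z) z₀ :=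
      fderiv_add hwdd hAdd
    have h3 : fderiv ℝ (fun z : ℂ => ε • qA z) z₀ = ε • qA := by
      have : (fun z : ℂ => ε • qA z) = fun z => (ε • qA) z := by funext z; simp
      rw [this]
      exact (ε • qA).fderiv
    rw [h1, h2, h3]
    simp [ContinuousLinearMap.add_apply, qA_apply]
  have hT1 : fderiv ℝ (fderiv ℝ φ) z₀ 1 1 ≤ 0 := second_deriv_test hD hφ2 hz₀D hlocmax 1
  have hTI : fderiv ℝ (fderiv ℝ φ) z₀ Complex.I Complex.I ≤ 0 := second_deriv_test hD hφ2 hz₀D hlocmax Complex.I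
  have e1 := hkey 1
  have eI := hkey Complex.I
  rw [e1] at hT1
  rw [eI] at hTI
  have hl := hlap z₀ hz₀D
  simp only [Complex.one_re, Complex.I_re] at hT1 hTI
  nlinarith


lemma fderiv2_add {D : Set ℂ} (hD : IsOpen D) {f g : ℂ → ℝ}
    (hf : ContDiffOn ℝ 2 f D) (hg : ContDiffOn ℝ 2 g D) {z : ℂ} (hz : z ∈ D) :
    fderiv ℝ (fderiv ℝ (fun x => f x + g x)) z
      = fderiv ℝ (fderiv ℝ f) z + fderiv ℝ (fderiv ℝ g) z := by
  have hev : (fun x => fderiv ℝ (fun y => f y + g y) x)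
      =ᶠ[nhds z] (fun x => fderiv ℝ f x + fderiv ℝ g x) := by
    filter_upwards [hD.mem_nhds hz] with x hx
    exact fderiv_add ((hf.contDiffAt (hD.mem_nhds hx)).differentiableAt (by norm_num))
      ((hg.contDiffAt (hD.mem_nhds hx)).differentiableAt (by norm_num))
  have hfd : DifferentiableAt ℝ (fderiv ℝ f) z := by
    have h1 : ContDiffAt ℝ 1 (fderiv ℝ f) z := (hf.contDiffAt (hD.mem_nhds hz)).fderiv_right (by norm_num)
    exact h1.differentiableAt (by norm_num)
  have hgd : DifferentiableAt ℝ (fderiv ℝ g) z := by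
    have h1 : ContDiffAt ℝ 1 (fderiv ℝ g) z := (hg.contDiffAt (hD.mem_nhds hz)).fderiv_right (by norm_num)
    exact h1.differentiableAt (by norm_num)
  rw [hev.fderiv_eq]
  exact fderiv_add hfd hgd

lemma fderiv2_const_mul {D : Set ℂ} (hD : IsOpen D) {f : ℂ → ℝ}
    (hf : ContDiffOn ℝ 2 f D) (e : ℝ) {z : ℂ} (hz : z ∈ D) :
    fderiv ℝ (fderiv ℝ (fun x => e * f x)) z = e • fderiv ℝ (fderiv ℝ f) z := by
  have hev : (fun x => fderiv ℝ (fun y => e * f y) x)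
      =ᶠ[nhds z] (fun x => e • fderiv ℝ f x) := by
    filter_upwards [hD.mem_nhds hz] with x hx
    exact fderiv_const_mul ((hf.contDiffAt (hD.mem_nhds hx)).differentiableAt (by norm_num)) e
  have hfd : DifferentiableAt ℝ (fderiv ℝ f) z := by
    have h1 : ContDiffAt ℝ 1 (fderiv ℝ f) z := (hf.contDiffAt (hD.mem_nhds hz)).fderiv_right (by norm_num)
    exact h1.differentiableAt (by norm_num)
  rw [hev.fderiv_eq]
  exact fderiv_const_smul hfd e

lemma fderiv2_sub_const {f : ℂ → ℝ} (c : ℝ) (z : ℂ) :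
    fderiv ℝ (fderiv ℝ (fun x => f x - c)) z = fderiv ℝ (fderiv ℝ f) z := by
  have h : (fderiv ℝ (fun y => f y - c)) = fderiv ℝ f := by
    funext x
    exact fderiv_sub_const c
  rw [h]

lemma fderiv2_sum {D : Set ℂ} (hD : IsOpen D) {ι : Type*} (s : Finset ι) (f : ι → ℂ → ℝ)
    (hf : ∀ i ∈ s, ContDiffOn ℝ 2 (f i) D) {z : ℂ} (hz : z ∈ D) :
    fderiv ℝ (fderiv ℝ (fun x => ∑ i ∈ s, f i x)) z
      = ∑ i ∈ s, fderiv ℝ (fderiv ℝ (f i)) z := by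
  classical
  induction s using Finset.induction_on with
  | empty =>
    simp only [Finset.sum_empty]
    have : (fun x : ℂ => (0:ℝ)) = fun _ => (0:ℝ) := rfl
    rw [show (fderiv ℝ (fun _ : ℂ => (0:ℝ))) = fun _ => 0 from by
      funext x; exact fderiv_const_apply 0]
    exact fderiv_const_apply 0
  | insert a s' hnotmem ih =>
    have hfa : ContDiffOn ℝ 2 (f a) D := hf a (Finset.mem_insert_self a s')
    have hfs : ∀ i ∈ s', ContDiffOn ℝ 2 (f i) D := fun i hi => hf i (Finset.mem_insert_of_mem hi)
    have hsum : ContDiffOn ℝ 2 (fun x => ∑ i ∈ s', f i x) D :=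
      ContDiffOn.sum fun i hi => hfs i hi
    have : (fun x => ∑ i ∈ insert a s', f i x)
        = fun x => f a x + ∑ i ∈ s', f i x := by
      funext x
      exact Finset.sum_insert hnotmem
    rw [this, fderiv2_add hD hfa hsum hz, Finset.sum_insert hnotmem, ih hfs]


lemma exists_chain (D : Set ℂ) (hD : IsOpen D) (hconn : IsConnected D) {p₀ z₁ w₀ : ℂ}
    (hz₁ : z₁ ∈ D) (hw₀ : w₀ ∈ D) {δ : ℝ} (hδ : 0 < δ)
    (hz₁d : dist z₁ p₀ < δ/4) (hw₀d : δ/4 ≤ dist w₀ p₀) :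
    ∃ (K : Set ℂ) (e₁ : ℂ), IsCompact K ∧ K.Nonempty ∧ K ⊆ D ∧
      K ⊆ Metric.closedBall p₀ (δ/4) ∧
      z₁ ∈ K ∧ e₁ ∈ K ∧ δ/4 ≤ dist e₁ p₀ ∧
      (∀ y ∈ Set.uIcc z₁.re e₁.re, ∃ a ∈ K, a.re = y) ∧
      (∀ y ∈ Set.uIcc z₁.im e₁.im, ∃ a ∈ K, a.im = y) := by
  have hpc : IsPathConnected D := hD.isConnected_iff_isPathConnected.mp hconn
  obtain ⟨γ, hγ⟩ := hpc.joinedIn z₁ hz₁ w₀ hw₀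
  set f : ℝ → ℂ := ⇑γ.extend with hfdef
  have hf : Continuous f := γ.continuous_extend
  have hfmem : ∀ t ∈ Set.Icc (0:ℝ) 1, f t ∈ D := by
    intro t ht
    rw [hfdef, γ.extend_apply ht]
    exact hγ _
  have hf0 : f 0 = z₁ := γ.extend_zero
  have hf1 : f 1 = w₀ := γ.extend_one
  set S : Set ℝ := Set.Icc (0:ℝ) 1 ∩ {t | δ/4 ≤ dist (f t) p₀} with hSdef
  have hSclosed : IsClosed S :=
    isClosed_Icc.inter (isClosed_le continuous_const (hf.dist continuous_const))
  have hSne : S.Nonempty := ⟨1, ⟨by norm_num, by rw [Set.mem_setOf_eq, hf1]; exact hw₀d⟩⟩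
  have hSbdd : BddBelow S := ⟨0, fun t ht => ht.1.1⟩
  set T := sInf S with hTdef
  have hTS : T ∈ S := hSclosed.csInf_mem hSne hSbdd
  have hT01 : T ∈ Set.Icc (0:ℝ) 1 := hTS.1
  have hTd : δ/4 ≤ dist (f T) p₀ := hTS.2
  have h0S : (0:ℝ) ∉ S := by
    intro h
    have := h.2
    rw [Set.mem_setOf_eq, hf0] at this
    linarith
  have hT0 : 0 < T := by
    rcases hT01.1.eq_or_lt with h | h
    · exfalso; apply h0S; rw [h]; exact hTS
    · exact h
  have hless : ∀ t, 0 ≤ t → t < T → dist (f t) p₀ < δ/4 := by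
    intro t ht0 htT
    by_contra hc
    push_neg at hc
    have htS : t ∈ S := ⟨⟨ht0, le_trans (le_of_lt htT) hT01.2⟩, hc⟩
    have := csInf_le hSbdd htS
    rw [← hTdef] at this
    linarith
  have hTeq : dist (f T) p₀ ≤ δ/4 := by
    by_contra hc
    push_neg at hc
    have hcont : ContinuousAt (fun t => dist (f t) p₀) T :=
      (hf.dist continuous_const).continuousAt
    have hev : ∀ᶠ t in nhds T, δ/4 < dist (f t) p₀ :=
      hcont.eventually_const_lt hc
    obtain ⟨η, hη, hball⟩ := Metric.mem_nhds_iff.mp hev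
    set t' := max (T/2) (T - η/2) with ht'def
    have ht'T : t' < T := by
      apply max_lt (by linarith) (by linarith)
    have ht'0 : 0 ≤ t' := le_trans (by linarith) (le_max_left _ _)
    have ht'ball : t' ∈ Metric.ball T η := by
      simp only [Metric.mem_ball, Real.dist_eq]
      rw [abs_of_nonpos (by linarith)]
      have : T - η/2 ≤ t' := le_max_right _ _
      linarith
    have := hball ht'ball
    have := hless t' ht'0 ht'T
    simp only [Set.mem_setOf_eq] at *
    linarith
  -- the compact chain
  refine ⟨f '' Set.Icc 0 T, f T, ?_, ?_, ?_, ?_, ?_, ?_, hTd, ?_, ?_⟩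
  · exact (isCompact_Icc).image hf
  · exact ⟨f 0, Set.mem_image_of_mem f (Set.mem_Icc.mpr ⟨le_refl 0, hT0.le⟩)⟩
  · rintro a ⟨t, ht, rfl⟩
    exact hfmem t ⟨ht.1, le_trans ht.2 hT01.2⟩
  · rintro a ⟨t, ht, rfl⟩
    rcases ht.2.eq_or_lt with h | h
    · rw [h]
      exact Metric.mem_closedBall.mpr hTeq
    · exact Metric.mem_closedBall.mpr (le_of_lt (hless t ht.1 h))
  · rw [← hf0]
    exact Set.mem_image_of_mem f (Set.mem_Icc.mpr ⟨le_refl 0, hT0.le⟩)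
  · exact Set.mem_image_of_mem f (Set.mem_Icc.mpr ⟨hT0.le, le_refl T⟩)
  · intro y hy
    have hcont : ContinuousOn (fun t => (f t).re) (Set.uIcc 0 T) :=
      (Complex.continuous_re.comp hf).continuousOn
    have := intermediate_value_uIcc hcont
    rw [← hf0] at hy
    have hy' : y ∈ Set.uIcc ((fun t => (f t).re) 0) ((fun t => (f t).re) T) := hy
    obtain ⟨t, ht, hty⟩ := this hy'
    rw [Set.uIcc_of_le hT0.le] at ht
    exact ⟨f t, Set.mem_image_of_mem f ht, hty⟩
  · intro y hy
    have hcont : ContinuousOn (fun t => (f t).im) (Set.uIcc 0 T) :=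
      (Complex.continuous_im.comp hf).continuousOn
    have := intermediate_value_uIcc hcont
    rw [← hf0] at hy
    have hy' : y ∈ Set.uIcc ((fun t => (f t).im) 0) ((fun t => (f t).im) T) := hy
    obtain ⟨t, ht, hty⟩ := this hy'
    rw [Set.uIcc_of_le hT0.le] at ht
    exact ⟨f t, Set.mem_image_of_mem f ht, hty⟩

/-- For a bounded regular domain the Robin function `Λ_D(p) = H(p,p)` tends to `-∞`
at the boundary, equivalently the capacity density `c_D(p) = e^{-Λ_D(p)}` tends to `+∞`. -/
theorem robin_function_boundary_limit (D : Set ℂ) (hD : IsOpen D)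
    (hDne : D.Nonempty) (hDconn : IsConnected D) (hDbdd : Bornology.IsBounded D)
    (H : ℂ → ℂ → ℝ)
    (hharm : ∀ p ∈ D, IsHarmonicOn (fun z => H z p) D)
    (hcont : ∀ p ∈ D, ContinuousOn (fun z => H z p) (closure D))
    (hbv : ∀ p ∈ D, ∀ z ∈ frontier D, H z p = Real.log ‖z - p‖)
    (p₀ : ℂ) (hp₀ : p₀ ∈ frontier D) :
    Tendsto (fun p => H p p) (nhdsWithin p₀ D) atBot ∧
    Tendsto (fun p => Real.exp (-(H p p))) (nhdsWithin p₀ D) atTop := by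
  have hp₀cl : p₀ ∈ closure D := frontier_subset_closure hp₀
  have hp₀D : p₀ ∉ D := by
    intro h
    have := hD.frontier_eq ▸ hp₀
    exact this.2 h
  have habspos : ∀ ζ, ζ ∉ D → ∀ p ∈ D, 0 < ‖ζ - p‖ := by
    intro ζ hζ p hp
    rw [norm_pos_iff]
    intro h
    rw [sub_eq_zero] at h
    exact hζ (h ▸ hp)
  -- basic log facts
  have hexp1 : (2.7182818283:ℝ) < Real.exp 1 := Real.exp_one_gt_d9
  have hlog2 : Real.log 2 ≤ 1 := by
    have h2 : (2:ℝ) ≤ Real.exp 1 := by linarith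
    calc Real.log 2 ≤ Real.log (Real.exp 1) := Real.log_le_log (by norm_num) h2
    _ = 1 := Real.log_exp 1
  have hlog80 : Real.log 80 ≤ 6 := by
    have h3 : (80:ℝ) ≤ Real.exp 6 := by
      have he : Real.exp 6 = (Real.exp 1)^6 := by
        rw [Real.exp_one_pow]; norm_num
      rw [he]
      calc (80:ℝ) ≤ 2.7^6 := by norm_num
      _ ≤ (Real.exp 1)^6 := pow_le_pow_left₀ (by norm_num) (by linarith) 6
    calc Real.log 80 ≤ Real.log (Real.exp 6) := Real.log_le_log (by norm_num) h3
    _ = 6 := Real.log_exp 6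
  have hlog4 : (1:ℝ) ≤ Real.log 4 := by
    have h4 : Real.exp 1 ≤ 4 := by linarith [Real.exp_one_lt_d9]
    calc (1:ℝ) = Real.log (Real.exp 1) := (Real.log_exp 1).symm
    _ ≤ Real.log 4 := Real.log_le_log (Real.exp_pos 1) h4
  have hmain : Tendsto (fun p => H p p) (nhdsWithin p₀ D) atBot := by
    rw [tendsto_atBot]
    intro M
    obtain ⟨w₀, hw₀⟩ := hDne
    have hr₀ : 0 < dist w₀ p₀ := dist_pos.mpr (fun h => hp₀D (h ▸ hw₀))
    set δ : ℝ := min (min 1 (dist w₀ p₀ / 2)) (Real.exp (M - 8)) with hδdef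
    have hδpos : 0 < δ := lt_min (lt_min one_pos (by positivity)) (Real.exp_pos _)
    have hδ1 : δ ≤ 1 := le_trans (min_le_left _ _) (min_le_left _ _)
    have hδr₀ : δ < dist w₀ p₀ :=
      lt_of_le_of_lt (le_trans (min_le_left _ _) (min_le_right _ _)) (by linarith)
    have hδM : Real.log δ ≤ M - 8 := by
      calc Real.log δ ≤ Real.log (Real.exp (M-8)) :=
            Real.log_le_log hδpos (min_le_right _ _)
      _ = M - 8 := Real.log_exp _
    -- a point of D very close to p₀
    obtain ⟨z₁, hz₁D, hz₁d⟩ : ∃ z₁ ∈ D, dist z₁ p₀ < δ/100 := by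
      obtain ⟨z₁, hz₁, hd⟩ := Metric.mem_closure_iff.mp hp₀cl (δ/100) (by positivity)
      exact ⟨z₁, hz₁, by rwa [dist_comm] at hd⟩
    have hw₀d : δ/4 ≤ dist w₀ p₀ := by linarith
    obtain ⟨K, e₁, hKcomp, hKne, hKD, hKball, hz₁K, he₁K, he₁d, hsurre, hsurim⟩ :=
      exists_chain D hD hDconn hz₁D hw₀ hδpos (by linarith) hw₀d
    -- spread
    have hsep5 : δ/5 ≤ ‖e₁ - z₁‖ := by
      have h1 := dist_triangle e₁ z₁ p₀
      have habs : ‖e₁ - z₁‖ = dist e₁ z₁ := (Complex.dist_eq e₁ z₁).symm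
      rw [habs]; linarith
    have he₁ball : dist e₁ p₀ ≤ δ/4 := Metric.mem_closedBall.mp (hKball he₁K)
    -- projection
    obtain ⟨π, hπ1, hπ2, hπ3⟩ :
        ∃ π : ℂ → ℝ, (∀ z w : ℂ, |π z - π w| ≤ ‖z - w‖) ∧
          δ/10 ≤ |π e₁ - π z₁| ∧ (∀ y ∈ Set.uIcc (π z₁) (π e₁), ∃ a ∈ K, π a = y) := by
      rcases le_or_gt (δ/10) |(e₁ - z₁).re| with h | h
      · refine ⟨Complex.re, fun z w => by rw [← Complex.sub_re]; exact Complex.abs_re_le_norm _, ?_, hsurre⟩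
        rwa [← Complex.sub_re]
      · refine ⟨Complex.im, fun z w => by rw [← Complex.sub_im]; exact Complex.abs_im_le_norm _, ?_, hsurim⟩
        rw [← Complex.sub_im]
        have := Complex.norm_le_abs_re_add_abs_im (e₁ - z₁)
        have him : |(e₁ - z₁).im| ≥ δ/5 - |(e₁ - z₁).re| := by linarith
        linarith
    set x₀ := π z₁ with hx₀
    set x₁ := π e₁ with hx₁
    set η := x₁ - x₀ with hη
    set ℓ := |η| with hℓ
    have hℓlb : δ/10 ≤ ℓ := by rw [hℓ, hη]; exact hπ2
    have hℓub : ℓ ≤ δ := by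
      have h1 := hπ1 e₁ z₁
      have habs : ‖e₁ - z₁‖ = dist e₁ z₁ := (Complex.dist_eq e₁ z₁).symm
      have h2 : dist e₁ z₁ ≤ dist e₁ p₀ + dist p₀ z₁ := dist_triangle _ _ _
      have h3 : dist p₀ z₁ = dist z₁ p₀ := dist_comm _ _
      have h4 : |π e₁ - π z₁| ≤ dist e₁ z₁ := by rw [← habs]; exact h1
      rw [hℓ, hη, hx₀, hx₁]
      linarith
    -- positive lower bound on distance from K to the frontier
    have hFne : (frontier D).Nonempty := ⟨p₀, hp₀⟩
    have hFclosed : IsClosed (frontier D) := isClosed_frontier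
    obtain ⟨astar, hastarK, hminK⟩ :=
      hKcomp.exists_isMinOn hKne (continuous_infDist_pt (frontier D)).continuousOn
    have hd₁pos : 0 < Metric.infDist astar (frontier D) := by
      rw [← hFclosed.notMem_iff_infDist_pos hFne]
      intro hmem
      have h1 : astar ∈ D := hKD hastarK
      have h2 := hD.frontier_eq ▸ hmem
      exact h2.2 h1
    set d' : ℝ := min (Metric.infDist astar (frontier D)) 1 with hd'def
    have hd'pos : 0 < d' := lt_min hd₁pos one_pos
    have hd'1 : d' ≤ 1 := min_le_right _ _
    have hdistK : ∀ a ∈ K, ∀ ζ ∈ frontier D, d' ≤ ‖ζ - a‖ := by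
      intro a ha ζ hζ
      have h1 : Metric.infDist a (frontier D) ≤ dist a ζ := Metric.infDist_le_dist_of_mem hζ
      have h2 : Metric.infDist astar (frontier D) ≤ Metric.infDist a (frontier D) := hminK ha
      have h3 : ‖ζ - a‖ = dist a ζ := by
        rw [Complex.dist_eq, norm_sub_rev]
      rw [h3]
      calc d' ≤ Metric.infDist astar (frontier D) := min_le_left _ _
      _ ≤ Metric.infDist a (frontier D) := h2
      _ ≤ dist a ζ := h1
    -- number of grid points
    set n : ℕ := ⌈-Real.log d'⌉₊ + 2 with hndef
    have hn2 : 2 ≤ n := by omega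
    have hnlog : -Real.log d' ≤ (n:ℝ) := by
      calc -Real.log d' ≤ (⌈-Real.log d'⌉₊ : ℝ) := Nat.le_ceil _
      _ ≤ (n:ℝ) := by rw [hndef]; push_cast; linarith
    have hnr : (2:ℝ) ≤ (n:ℝ) := by exact_mod_cast hn2
    have hn1r : (1:ℝ) ≤ (n:ℝ) - 1 := by linarith
    have hnpos : (0:ℝ) < (n:ℝ) := by linarith
    -- the grid
    set g : ℝ := ℓ / ((n:ℝ) - 1) with hgdef
    have hgpos : 0 < g := div_pos (by linarith) (by linarith)
    set t : ℕ → ℝ := fun k => x₀ + ((min k (n-1) : ℕ):ℝ) / ((n:ℝ)-1) * η with htdef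
    have hcastn1 : ((n - 1 : ℕ):ℝ) = (n:ℝ) - 1 := by
      push_cast [Nat.cast_sub (by omega : 1 ≤ n)]
      ring
    have htmem : ∀ k : ℕ, t k ∈ Set.uIcc x₀ x₁ := by
      intro k
      set c : ℝ := ((min k (n-1) : ℕ):ℝ) / ((n:ℝ)-1) with hcdef
      have hc0 : 0 ≤ c := by positivity
      have hc1 : c ≤ 1 := by
        rw [hcdef, div_le_one (by linarith)]
        calc ((min k (n-1) : ℕ):ℝ) ≤ ((n-1:ℕ):ℝ) := by
              exact_mod_cast Nat.cast_le.mpr (min_le_right _ _)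
        _ = (n:ℝ) - 1 := hcastn1
      have hx₁eq : x₁ = x₀ + η := by rw [hη]; ring
      rcases le_or_gt 0 η with hη0 | hη0
      · apply Set.mem_uIcc.mpr; left
        constructor
        · rw [htdef]; simp only []; nlinarith
        · rw [htdef, hx₁eq]; simp only []; nlinarith
      · apply Set.mem_uIcc.mpr; right
        constructor
        · rw [htdef, hx₁eq]; simp only []; nlinarith
        · rw [htdef]; simp only []; nlinarith
    have hex : ∀ k : ℕ, ∃ a, a ∈ K ∧ π a = t k := by
      intro k
      obtain ⟨a, ha, hpa⟩ := hπ3 (t k) (htmem k)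
      exact ⟨a, ha, hpa⟩
    choose a haK haπ using hex
    have haD : ∀ k, a k ∈ D := fun k => hKD (haK k)
    have haball : ∀ k, ‖p₀ - a k‖ ≤ δ/4 := by
      intro k
      have h1 : dist (a k) p₀ ≤ δ/4 := Metric.mem_closedBall.mp (hKball (haK k))
      have h2 : ‖p₀ - a k‖ = dist p₀ (a k) := Complex.dist_eq p₀ (a k) ▸ rfl
      rw [h2, dist_comm]
      exact h1
    have hapos : ∀ k, 0 < ‖p₀ - a k‖ :=
      fun k => habspos p₀ hp₀D (a k) (haD k)
    -- grid spacing
    have hsepgrid : ∀ j k : ℕ, j < n → k < n → |(j:ℝ) - (k:ℝ)| * g ≤ |t j - t k| := by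
      intro j k hj hk
      have hje : min j (n-1) = j := min_eq_left (by omega)
      have hke : min k (n-1) = k := min_eq_left (by omega)
      have heq : t j - t k = ((j:ℝ) - (k:ℝ)) / ((n:ℝ)-1) * η := by
        rw [htdef]
        simp only [hje, hke]
        ring
      rw [heq, abs_mul, abs_div, _root_.abs_of_nonneg (by linarith : (0:ℝ) ≤ (n:ℝ)-1)]
      apply le_of_eq
      rw [hgdef, hℓ]
      ring
    -- translate harmonicity into second fderivs
    have hlap_tr : ∀ f : ℂ → ℝ,
        (∀ z ∈ D, iteratedFDeriv ℝ 2 f z ![1,1] + iteratedFDeriv ℝ 2 f z ![Complex.I, Complex.I] = 0) →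
        ∀ z ∈ D, fderiv ℝ (fderiv ℝ f) z 1 1 + fderiv ℝ (fderiv ℝ f) z Complex.I Complex.I = 0 := by
      intro f hf z hz
      have h := hf z hz
      rw [iteratedFDeriv_two_apply, iteratedFDeriv_two_apply] at h
      simpa using h
    -- the boundary estimate
    have hbdry : ∀ p ∈ D, dist p p₀ < δ/100 → ∀ ζ ∈ frontier D,
        Real.log (‖ζ - p‖) ≤
          8 + (n:ℝ)⁻¹ * ∑ k ∈ Finset.range n, Real.log (‖ζ - a k‖) := by
      intro p hp hpd ζ hζ
      have hζD : ζ ∉ D := by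
        intro h
        have h2 := hD.frontier_eq ▸ hζ
        exact h2.2 h
      have hζppos : 0 < ‖ζ - p‖ := habspos ζ hζD p hp
      set τ : ℝ := ‖ζ - p₀‖ with hτdef
      have hτ0 : 0 ≤ τ := norm_nonneg _
      have hζp : ‖ζ - p‖ ≤ τ + δ/100 := by
        have h1 : ζ - p = (ζ - p₀) + (p₀ - p) := by ring
        calc ‖ζ - p‖ = ‖(ζ - p₀) + (p₀ - p)‖ := by rw [← h1]
        _ ≤ ‖ζ - p₀‖ + ‖p₀ - p‖ := norm_add_le _ _
        _ ≤ τ + δ/100 := by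
              have h2 : ‖p₀ - p‖ = dist p₀ p := by rw [Complex.dist_eq]
              rw [h2, dist_comm]
              simp only [← hτdef, le_refl, add_le_add_iff_left]
              linarith
      rcases le_or_gt δ τ with hτδ | hτδ
      · -- far case
        have hτpos : 0 < τ := lt_of_lt_of_le hδpos hτδ
        have hterm : ∀ k ∈ Finset.range n,
            Real.log (τ/2) ≤ Real.log (‖ζ - a k‖) := by
          intro k _
          apply Real.log_le_log (by positivity)
          have h1 : ζ - p₀ = (ζ - a k) + (a k - p₀) := by ring
          have h2 : ‖a k - p₀‖ = ‖p₀ - a k‖ :=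
            norm_sub_rev _ _
          have h3 : τ ≤ ‖ζ - a k‖ + δ/4 := by
            calc τ = ‖(ζ - a k) + (a k - p₀)‖ := by rw [hτdef, ← h1]
            _ ≤ ‖ζ - a k‖ + ‖a k - p₀‖ := norm_add_le _ _
            _ ≤ ‖ζ - a k‖ + δ/4 := by rw [h2]; linarith [haball k]
          linarith
        have hsum : (n:ℝ) * Real.log (τ/2)
            ≤ ∑ k ∈ Finset.range n, Real.log (‖ζ - a k‖) := by
          calc (n:ℝ) * Real.log (τ/2) = ∑ _k ∈ Finset.range n, Real.log (τ/2) := by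
                rw [Finset.sum_const, Finset.card_range, nsmul_eq_mul]
          _ ≤ _ := Finset.sum_le_sum hterm
        have havg : Real.log (τ/2)
            ≤ (n:ℝ)⁻¹ * ∑ k ∈ Finset.range n, Real.log (‖ζ - a k‖) := by
          rw [inv_mul_eq_div, le_div_iff₀ hnpos]
          linarith [hsum]
        have hdata : Real.log (‖ζ - p‖) ≤ Real.log (2*τ) := by
          apply Real.log_le_log hζppos
          linarith
        have h2τ : Real.log (2*τ) = Real.log 2 + Real.log τ :=
          Real.log_mul (by norm_num) hτpos.ne'
        have hτ2 : Real.log (τ/2) = Real.log τ - Real.log 2 :=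
          Real.log_div hτpos.ne' (by norm_num)
        linarith
      · -- near case
        have hU := grid_bound hn2 (π ζ) hgpos hd'pos hsepgrid
        have hterm : ∀ k ∈ Finset.range n,
            Real.log (max d' |π ζ - t k|) ≤ Real.log (‖ζ - a k‖) := by
          intro k _
          apply Real.log_le_log (lt_of_lt_of_le hd'pos (le_max_left _ _))
          apply max_le
          · exact hdistK (a k) (haK k) ζ hζ
          · rw [← haπ k]
            exact hπ1 ζ (a k)
        have h1 : Real.log d' + ((n:ℝ)-1) * (Real.log (((n:ℝ)-1)*g/4) - 1)
            ≤ ∑ k ∈ Finset.range n, Real.log (‖ζ - a k‖) :=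
          le_trans hU (Finset.sum_le_sum hterm)
        have hng : ((n:ℝ)-1)*g = ℓ := by
          rw [hgdef]
          field_simp
        rw [hng] at h1
        have hc0 : Real.log (ℓ/4) - 1 ≤ 0 := by
          have h2 : Real.log (ℓ/4) ≤ 0 := Real.log_nonpos (by linarith) (by linarith)
          linarith
        have havg : Real.log (ℓ/4) - 2
            ≤ (n:ℝ)⁻¹ * ∑ k ∈ Finset.range n, Real.log (‖ζ - a k‖) := by
          rw [inv_mul_eq_div, le_div_iff₀ hnpos]
          have hle : (Real.log (ℓ/4) - 2) * (n:ℝ)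
              ≤ Real.log d' + ((n:ℝ)-1)*(Real.log (ℓ/4)-1) := by
            nlinarith [hnlog, hc0, hnr]
          linarith
        have hdata : Real.log (‖ζ - p‖) ≤ Real.log (2*δ) := by
          apply Real.log_le_log hζppos
          linarith
        have h80 : Real.log (2*δ) = Real.log (δ/40) + Real.log 80 := by
          rw [← Real.log_mul (by positivity) (by norm_num)]
          congr 1
          ring
        have hll : Real.log (δ/40) ≤ Real.log (ℓ/4) :=
          Real.log_le_log (by positivity) (by linarith)
        linarith
    -- the maximum principle step
    have hkey : ∀ p ∈ D, dist p p₀ < δ/100 →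
        H p p ≤ 8 + (n:ℝ)⁻¹ * ∑ k ∈ Finset.range n, H p (a k) := by
      intro p hp hpd
      set S : ℂ → ℝ := fun z => ∑ k ∈ Finset.range n, H z (a k) with hSdef
      set v : ℂ → ℝ := fun z => H z p - (8 + (n:ℝ)⁻¹ * S z) with hvdef
      have hHp2 : ContDiffOn ℝ 2 (fun z => H z p) D := (hharm p hp).1
      have hHk2 : ∀ k ∈ Finset.range n, ContDiffOn ℝ 2 (fun z => H z (a k)) D :=
        fun k _ => (hharm _ (haD k)).1
      have hS2 : ContDiffOn ℝ 2 S D := ContDiffOn.sum hHk2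
      have hv2 : ContDiffOn ℝ 2 v D := by
        apply ContDiffOn.sub hHp2
        apply ContDiffOn.add contDiffOn_const
        have h := hS2.const_smul ((n:ℝ)⁻¹)
        simpa [smul_eq_mul] using h
      have hlapv : ∀ z ∈ D,
          fderiv ℝ (fderiv ℝ v) z 1 1 + fderiv ℝ (fderiv ℝ v) z Complex.I Complex.I = 0 := by
        intro z hz
        have hveq : v = fun x => (fun y => H y p + (-(n:ℝ)⁻¹) * S y) x - 8 := by
          funext x
          simp only [hvdef]
          ring
        have hm2 : ContDiffOn ℝ 2 (fun y => (-(n:ℝ)⁻¹) * S y) D := by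
          have h := hS2.const_smul (-(n:ℝ)⁻¹)
          simpa [smul_eq_mul] using h
        have hD2v : fderiv ℝ (fderiv ℝ v) z
            = fderiv ℝ (fderiv ℝ (fun y => H y p)) z
              + (-(n:ℝ)⁻¹) • fderiv ℝ (fderiv ℝ S) z := by
          rw [hveq, fderiv2_sub_const, fderiv2_add hD hHp2 hm2 hz,
            fderiv2_const_mul hD hS2 (-(n:ℝ)⁻¹) hz]
        have hD2S : fderiv ℝ (fderiv ℝ S) z
            = ∑ k ∈ Finset.range n, fderiv ℝ (fderiv ℝ (fun y => H y (a k))) z := by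
          rw [hSdef]
          exact fderiv2_sum hD (Finset.range n) (fun k => fun y => H y (a k)) hHk2 hz
        have hp0 := hlap_tr _ (hharm p hp).2 z hz
        have hsum0 : (∑ k ∈ Finset.range n, fderiv ℝ (fderiv ℝ (fun y => H y (a k))) z 1 1)
            + (∑ k ∈ Finset.range n, fderiv ℝ (fderiv ℝ (fun y => H y (a k))) z Complex.I Complex.I) = 0 := by
          rw [← Finset.sum_add_distrib]
          apply Finset.sum_eq_zero
          intro k hk
          exact hlap_tr _ (hharm _ (haD k)).2 z hz
        rw [hD2v, hD2S]
        simp only [ContinuousLinearMap.add_apply, ContinuousLinearMap.coe_smul',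
          Pi.smul_apply, ContinuousLinearMap.coe_sum', Finset.sum_apply, smul_eq_mul]
        linear_combination hp0 + (-(n:ℝ)⁻¹) * hsum0
      have hvc : ContinuousOn v (closure D) := by
        apply ContinuousOn.sub (hcont p hp)
        apply ContinuousOn.add continuousOn_const
        apply ContinuousOn.mul continuousOn_const
        exact continuousOn_finset_sum _ (fun k _ => hcont _ (haD k))
      have hvfr : ∀ ζ ∈ frontier D, v ζ ≤ 0 := by
        intro ζ hζ
        have h1 := hbdry p hp hpd ζ hζ
        have h2 : S ζ = ∑ k ∈ Finset.range n, Real.log (‖ζ - a k‖) :=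
          Finset.sum_congr rfl (fun k _ => hbv (a k) (haD k) ζ hζ)
        simp only [hvdef]
        rw [hbv p hp ζ hζ, h2]
        linarith
      have hfin := max_principle hD hDbdd hv2 hlapv hvc hvfr p hp
      simp only [hvdef, hSdef] at hfin
      linarith
    -- pass to the limit
    have hlimk : ∀ k, Tendsto (fun p => H p (a k)) (nhdsWithin p₀ D)
        (nhds (Real.log (‖p₀ - a k‖))) := by
      intro k
      have h1 : ContinuousWithinAt (fun z => H z (a k)) (closure D) p₀ :=
        (hcont (a k) (haD k)) p₀ hp₀cl
      have h3 : nhdsWithin p₀ D ≤ nhdsWithin p₀ (closure D) :=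
        nhdsWithin_mono _ subset_closure
      have h4 := h1.tendsto.mono_left h3
      rwa [hbv (a k) (haD k) p₀ hp₀] at h4
    have hsumlim : Tendsto (fun p => 8 + (n:ℝ)⁻¹ * ∑ k ∈ Finset.range n, H p (a k))
        (nhdsWithin p₀ D)
        (nhds (8 + (n:ℝ)⁻¹ * ∑ k ∈ Finset.range n, Real.log (‖p₀ - a k‖))) := by
      apply Tendsto.const_add
      apply Tendsto.const_mul
      exact tendsto_finset_sum _ (fun k _ => hlimk k)
    have hlimval : 8 + (n:ℝ)⁻¹ * ∑ k ∈ Finset.range n, Real.log (‖p₀ - a k‖)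
        < 8 + Real.log δ := by
      have hterm : ∀ k ∈ Finset.range n,
          Real.log (‖p₀ - a k‖) ≤ Real.log δ - 1 := by
        intro k _
        have h1 : Real.log (‖p₀ - a k‖) ≤ Real.log (δ/4) :=
          Real.log_le_log (hapos k) (haball k)
        have h2 : Real.log (δ/4) = Real.log δ - Real.log 4 :=
          Real.log_div hδpos.ne' (by norm_num)
        linarith
      have hsum : ∑ k ∈ Finset.range n, Real.log (‖p₀ - a k‖)
          ≤ (n:ℝ) * (Real.log δ - 1) := by
        calc ∑ k ∈ Finset.range n, Real.log (‖p₀ - a k‖)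
            ≤ ∑ _k ∈ Finset.range n, (Real.log δ - 1) := Finset.sum_le_sum hterm
        _ = (n:ℝ) * (Real.log δ - 1) := by
              rw [Finset.sum_const, Finset.card_range, nsmul_eq_mul]
      have h3 : (n:ℝ)⁻¹ * ∑ k ∈ Finset.range n, Real.log (‖p₀ - a k‖)
          ≤ Real.log δ - 1 := by
        rw [inv_mul_eq_div, div_le_iff₀ hnpos]
        linarith [hsum]
      linarith
    have hev2 : ∀ᶠ p in nhdsWithin p₀ D,
        8 + (n:ℝ)⁻¹ * ∑ k ∈ Finset.range n, H p (a k) < 8 + Real.log δ :=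
      hsumlim.eventually_lt_const hlimval
    have hev3 : ∀ᶠ p in nhdsWithin p₀ D, p ∈ D := eventually_mem_nhdsWithin
    have hev4 : ∀ᶠ p in nhdsWithin p₀ D, dist p p₀ < δ/100 := by
      have h1 : Metric.ball p₀ (δ/100) ∈ nhdsWithin p₀ D :=
        nhdsWithin_le_nhds (Metric.ball_mem_nhds p₀ (by positivity))
      filter_upwards [h1] with p hp
      exact Metric.mem_ball.mp hp
    filter_upwards [hev2, hev3, hev4] with p h2 h3 h4
    have h5 := hkey p h3 h4
    linarith
  refine ⟨hmain, ?_⟩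
  have h1 : Tendsto (fun p => -(H p p)) (nhdsWithin p₀ D) atTop :=
    tendsto_neg_atBot_atTop.comp hmain
  exact Real.tendsto_exp_atTop.comp h1
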